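/- Let λ be an integer with λ ≥ 2 and let ν₁, ν₂, ν₃ ∈ ℂ satisfy λ = ν₂ − ν₃ + 1 and λ = ν₁ − ν₂ + 1. Then the solution space of the system S(λ,ν) is four-dimensional, spanned by the indicator function of {λ}, the indicator function of {−λ}, and the two functions c₀ and c₁ defined by: c₀(λ−2k) = (∏_{a=0}^{2k−1}(2λ−a)) / (2k)! for 0 ≤ k ≤ λ, and c₀(q) = 0 at all other integers q; c₁(λ−1−2k) = (∏_{a=0}^{2k−1}(2λ−1−a)) / (2k+1)! for 0 ≤ k ≤ λ−1, and c₁(q) = 0 at all other integers q (empty products equal 1). -/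

import Mathlib

/-- A function `c : ℤ → ℂ` is a solution of the system `S(λ,ν)`:
it vanishes for `|q| > λ`, and satisfies the two families of equations (E1) and (E2). -/
def IsSolS (lam : ℤ) (ν₁ ν₂ ν₃ : ℂ) (c : ℤ → ℂ) : Prop :=
  (∀ q : ℤ, lam < |q| → c q = 0) ∧
  (∀ q : ℤ, -lam + 2 ≤ q → q ≤ lam - 1 →
    ((lam : ℂ) - (q : ℂ) + 2) * ((lam : ℂ) - (q : ℂ) + 1) * (ν₁ - ν₂ + (q : ℂ) - 1) * c (q - 2)
      - ((lam : ℂ) + (q : ℂ)) * ((lam : ℂ) + (q : ℂ) - 1) *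
          (ν₁ + ν₂ - 2 * ν₃ - 2 * (lam : ℂ) + (q : ℂ) + 1) * c q = 0) ∧
  (∀ q : ℤ, -lam + 1 ≤ q → q ≤ lam - 2 →
    ((lam : ℂ) - (q : ℂ)) * ((lam : ℂ) - (q : ℂ) - 1) *
        (ν₁ + ν₂ - 2 * ν₃ - 2 * (lam : ℂ) - (q : ℂ) + 1) * c q
      - ((lam : ℂ) + (q : ℂ) + 2) * ((lam : ℂ) + (q : ℂ) + 1) * (ν₁ - ν₂ - (q : ℂ) - 1) *
          c (q + 2) = 0)

/-- The indicator function (in `ℤ → ℂ`) of the singleton `{a}`. -/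
def indicatorFn (a : ℤ) : ℤ → ℂ := fun q => if q = a then 1 else 0

/-- The solution `c₀`: `c₀(λ−2k) = (∏_{a=0}^{2k−1}(2λ−a))/(2k)!` for `0 ≤ k ≤ λ`,
and `c₀ = 0` elsewhere. -/
noncomputable def solC0 (lam : ℤ) : ℤ → ℂ := fun q =>
  if (lam - q) % 2 = 0 ∧ -lam ≤ q ∧ q ≤ lam then
    (∏ a ∈ Finset.range (lam - q).toNat, (2 * (lam : ℂ) - (a : ℂ)))
      / (Nat.factorial (lam - q).toNat : ℂ)
  else 0

/-- The solution `c₁`: `c₁(λ−1−2k) = (∏_{a=0}^{2k−1}(2λ−1−a))/(2k+1)!` for `0 ≤ k ≤ λ−1`,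
and `c₁ = 0` elsewhere. -/
noncomputable def solC1 (lam : ℤ) : ℤ → ℂ := fun q =>
  if (lam - 1 - q) % 2 = 0 ∧ -lam + 1 ≤ q ∧ q ≤ lam - 1 then
    (∏ a ∈ Finset.range (lam - 1 - q).toNat, (2 * (lam : ℂ) - 1 - (a : ℂ)))
      / (Nat.factorial ((lam - 1 - q).toNat + 1) : ℂ)
  else 0

namespace SAux

lemma prod_desc (N : ℕ) : ∀ k, k ≤ N →
    ∏ a ∈ Finset.range k, ((N:ℂ) - (a:ℂ)) = (N.descFactorial k : ℂ)
  | 0, _ => by simp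
  | (k+1), h => by
    rw [Finset.prod_range_succ, prod_desc N k (by omega), Nat.descFactorial_succ]
    push_cast [Nat.cast_sub (by omega : k ≤ N)]
    ring

lemma prod_desc_self (N : ℕ) :
    ∏ a ∈ Finset.range N, ((N:ℂ) - (a:ℂ)) = (N.factorial : ℂ) := by
  rw [prod_desc N N le_rfl, Nat.descFactorial_self]

/-- The two-term recurrence equivalent to the system when the ν-parameters are special. -/
def Rrec (lam : ℤ) (c : ℤ → ℂ) (q : ℤ) : Prop :=
  ((lam:ℂ) - (q:ℂ) + 2) * ((lam:ℂ) - (q:ℂ) + 1) * c (q - 2)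
    = ((lam:ℂ) + (q:ℂ)) * ((lam:ℂ) + (q:ℂ) - 1) * c q

lemma cast_eq_zero_of {a : ℤ} (h : a = 0) : ((a:ℂ)) = 0 := Int.cast_eq_zero.mpr h

lemma isSolS_iff (lam : ℤ) (hlam : 2 ≤ lam) (ν₁ ν₂ ν₃ : ℂ)
    (h23 : (lam : ℂ) = ν₂ - ν₃ + 1) (h12 : (lam : ℂ) = ν₁ - ν₂ + 1) (c : ℤ → ℂ) :
    IsSolS lam ν₁ ν₂ ν₃ c ↔
      ((∀ q : ℤ, lam < |q| → c q = 0) ∧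
       ∀ q : ℤ, -lam + 3 ≤ q → q ≤ lam - 1 → Rrec lam c q) := by
  have hν₁ : ν₁ = ν₂ + ((lam:ℂ) - 1) := by linear_combination -h12
  have hν₃ : ν₃ = ν₂ - ((lam:ℂ) - 1) := by linear_combination h23
  subst hν₁ hν₃
  constructor
  · rintro ⟨h0, h1, _⟩
    refine ⟨h0, fun q hq1 hq2 => ?_⟩
    have hE := h1 q (by omega) hq2
    have hne : ((lam:ℂ) + (q:ℂ) - 2) ≠ 0 := by
      have : ((lam + q - 2 : ℤ) : ℂ) ≠ 0 := Int.cast_ne_zero.mpr (by omega)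
      push_cast at this; exact this
    have key : ((lam:ℂ) + (q:ℂ) - 2) *
        (((lam:ℂ) - (q:ℂ) + 2) * ((lam:ℂ) - (q:ℂ) + 1) * c (q - 2)
          - ((lam:ℂ) + (q:ℂ)) * ((lam:ℂ) + (q:ℂ) - 1) * c q) = 0 := by
      linear_combination hE
    rcases mul_eq_zero.mp key with h | h
    · exact absurd h hne
    · unfold Rrec; linear_combination h
  · rintro ⟨h0, hR⟩
    refine ⟨h0, fun q hq1 hq2 => ?_, fun q hq1 hq2 => ?_⟩
    · by_cases hq3 : -lam + 3 ≤ q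
      · have hr := hR q hq3 hq2
        unfold Rrec at hr
        linear_combination ((lam:ℂ) + (q:ℂ) - 2) * hr
      · have hz : (lam:ℂ) + (q:ℂ) - 2 = 0 := by
          have : ((lam + q - 2 : ℤ) : ℂ) = 0 := cast_eq_zero_of (by omega)
          push_cast at this; linear_combination this
        linear_combination (((lam:ℂ) - (q:ℂ) + 2) * ((lam:ℂ) - (q:ℂ) + 1) * c (q - 2)
          - ((lam:ℂ) + (q:ℂ)) * ((lam:ℂ) + (q:ℂ) - 1) * c q) * hz
    · by_cases hq3 : q ≤ lam - 3
      · have hr := hR (q + 2) (by omega) (by omega)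
        unfold Rrec at hr
        push_cast at hr
        rw [show q + 2 - 2 = q by ring] at hr
        linear_combination ((lam:ℂ) - (q:ℂ) - 2) * hr
      · have hz : (lam:ℂ) - (q:ℂ) - 2 = 0 := by
          have : ((lam - q - 2 : ℤ) : ℂ) = 0 := cast_eq_zero_of (by omega)
          push_cast at this; linear_combination this
        linear_combination (((lam:ℂ) - (q:ℂ)) * ((lam:ℂ) - (q:ℂ) - 1) * c q
          - ((lam:ℂ) + (q:ℂ) + 2) * ((lam:ℂ) + (q:ℂ) + 1) * c (q + 2)) * hz

lemma abs_cases' {lam q : ℤ} (h : lam < |q|) : q < -lam ∨ lam < q := by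
  rcases le_or_gt q 0 with h0 | h0
  · left; rw [abs_of_nonpos h0] at h; omega
  · right; rwa [abs_of_pos h0] at h

end SAux
namespace SAux

lemma rrec_indicator_lam (lam : ℤ) : ∀ q, -lam + 3 ≤ q → q ≤ lam - 1 →
    Rrec lam (indicatorFn lam) q := by
  intro q h1 h2
  unfold Rrec indicatorFn
  rw [if_neg (by omega : ¬ q - 2 = lam), if_neg (by omega : ¬ q = lam)]
  ring

lemma rrec_indicator_neg_lam (lam : ℤ) : ∀ q, -lam + 3 ≤ q → q ≤ lam - 1 →
    Rrec lam (indicatorFn (-lam)) q := by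
  intro q h1 h2
  unfold Rrec indicatorFn
  rw [if_neg (by omega : ¬ q - 2 = -lam), if_neg (by omega : ¬ q = -lam)]
  ring

lemma rrec_solC0 (lam : ℤ) (hlam : 2 ≤ lam) : ∀ q, -lam + 3 ≤ q → q ≤ lam - 1 →
    Rrec lam (solC0 lam) q := by
  intro q h1 h2
  unfold Rrec solC0
  by_cases hp : (lam - q) % 2 = 0
  · rw [if_pos (by omega : (lam - (q-2)) % 2 = 0 ∧ -lam ≤ q - 2 ∧ q - 2 ≤ lam),
      if_pos (⟨hp, by omega, by omega⟩ : (lam - q) % 2 = 0 ∧ -lam ≤ q ∧ q ≤ lam)]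
    set m := (lam - q).toNat with hm
    have hmq : (lam - (q - 2)).toNat = m + 2 := by omega
    rw [hmq]
    have hq' : (q:ℂ) = (lam:ℂ) - (m:ℂ) := by
      have : (q : ℤ) = lam - (m : ℤ) := by omega
      exact_mod_cast congrArg (Int.cast : ℤ → ℂ) this
    rw [Finset.prod_range_succ, Finset.prod_range_succ]
    have hfac : (Nat.factorial (m + 2) : ℂ) = ((m:ℂ) + 2) * ((m:ℂ) + 1) * (Nat.factorial m : ℂ) := by
      simp [Nat.factorial_succ]; push_cast; ring
    have hfne : (Nat.factorial m : ℂ) ≠ 0 := Nat.cast_ne_zero.mpr (Nat.factorial_ne_zero m)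
    rw [hq', hfac]
    have h2ne : ((m:ℂ) + 2) ≠ 0 := by
      have : ((m + 2 : ℕ) : ℂ) ≠ 0 := Nat.cast_ne_zero.mpr (by omega)
      push_cast at this; exact this
    have h1ne : ((m:ℂ) + 1) ≠ 0 := by
      have : ((m + 1 : ℕ) : ℂ) ≠ 0 := Nat.cast_ne_zero.mpr (by omega)
      push_cast at this; exact this
    field_simp
    push_cast
    ring
  · rw [if_neg (by omega : ¬((lam - (q-2)) % 2 = 0 ∧ -lam ≤ q - 2 ∧ q - 2 ≤ lam)),
      if_neg (by omega : ¬((lam - q) % 2 = 0 ∧ -lam ≤ q ∧ q ≤ lam))]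
    ring

lemma rrec_solC1 (lam : ℤ) (hlam : 2 ≤ lam) : ∀ q, -lam + 3 ≤ q → q ≤ lam - 1 →
    Rrec lam (solC1 lam) q := by
  intro q h1 h2
  unfold Rrec solC1
  by_cases hp : (lam - 1 - q) % 2 = 0
  · rw [if_pos (by omega : (lam - 1 - (q-2)) % 2 = 0 ∧ -lam + 1 ≤ q - 2 ∧ q - 2 ≤ lam - 1),
      if_pos (⟨hp, by omega, by omega⟩ : (lam - 1 - q) % 2 = 0 ∧ -lam + 1 ≤ q ∧ q ≤ lam - 1)]
    set m := (lam - 1 - q).toNat with hm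
    have hmq : (lam - 1 - (q - 2)).toNat = m + 2 := by omega
    rw [hmq]
    have hq' : (q:ℂ) = (lam:ℂ) - 1 - (m:ℂ) := by
      have : (q : ℤ) = lam - 1 - (m : ℤ) := by omega
      have := congrArg (Int.cast : ℤ → ℂ) this
      push_cast at this; exact this
    rw [Finset.prod_range_succ, Finset.prod_range_succ]
    have hfac : (Nat.factorial (m + 2 + 1) : ℂ)
        = ((m:ℂ) + 3) * ((m:ℂ) + 2) * (Nat.factorial (m + 1) : ℂ) := by
      simp [Nat.factorial_succ]; push_cast; ring
    have hfne : (Nat.factorial (m + 1) : ℂ) ≠ 0 := Nat.cast_ne_zero.mpr (Nat.factorial_ne_zero _)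
    rw [hq', hfac]
    have h2ne : ((m:ℂ) + 2) ≠ 0 := by
      have : ((m + 2 : ℕ) : ℂ) ≠ 0 := Nat.cast_ne_zero.mpr (by omega)
      push_cast at this; exact this
    have h3ne : ((m:ℂ) + 3) ≠ 0 := by
      have : ((m + 3 : ℕ) : ℂ) ≠ 0 := Nat.cast_ne_zero.mpr (by omega)
      push_cast at this; exact this
    field_simp
    push_cast
    ring
  · rw [if_neg (by omega : ¬((lam - 1 - (q-2)) % 2 = 0 ∧ -lam + 1 ≤ q - 2 ∧ q - 2 ≤ lam - 1)),
      if_neg (by omega : ¬((lam - 1 - q) % 2 = 0 ∧ -lam + 1 ≤ q ∧ q ≤ lam - 1))]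
    ring

end SAux
namespace SAux

variable {lam : ℤ}

lemma solC0_at_lam (hlam : 2 ≤ lam) : solC0 lam lam = 1 := by
  unfold solC0
  rw [if_pos (by omega : (lam - lam) % 2 = 0 ∧ -lam ≤ lam ∧ lam ≤ lam),
    (by omega : (lam - lam).toNat = 0)]
  simp

lemma solC0_at_neg_lam (hlam : 2 ≤ lam) : solC0 lam (-lam) = 1 := by
  unfold solC0
  rw [if_pos (by omega : (lam - -lam) % 2 = 0 ∧ -lam ≤ -lam ∧ -lam ≤ lam)]
  set n := (lam - -lam).toNat with hn
  have h2 : 2 * (lam:ℂ) = (n:ℂ) := by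
    have : 2 * lam = (n : ℤ) := by omega
    have := congrArg (Int.cast : ℤ → ℂ) this
    push_cast at this; exact this
  rw [h2, prod_desc_self]
  exact div_self (Nat.cast_ne_zero.mpr (Nat.factorial_ne_zero n))

lemma solC0_at_lam_sub_two (hlam : 2 ≤ lam) :
    solC0 lam (lam - 2) = 2 * (lam:ℂ) * (2 * (lam:ℂ) - 1) / 2 := by
  unfold solC0
  rw [if_pos (by omega : (lam - (lam - 2)) % 2 = 0 ∧ -lam ≤ lam - 2 ∧ lam - 2 ≤ lam),
    (by omega : (lam - (lam - 2)).toNat = 2)]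
  rw [Finset.prod_range_succ, Finset.prod_range_succ]
  norm_num [Nat.factorial]

lemma solC0_at_lam_sub_two_ne (hlam : 2 ≤ lam) : solC0 lam (lam - 2) ≠ 0 := by
  rw [solC0_at_lam_sub_two hlam]
  have h1 : (2 * (lam:ℂ)) ≠ 0 := by
    have : ((2 * lam : ℤ) : ℂ) ≠ 0 := Int.cast_ne_zero.mpr (by omega)
    push_cast at this; exact this
  have h2 : (2 * (lam:ℂ) - 1) ≠ 0 := by
    have : ((2 * lam - 1 : ℤ) : ℂ) ≠ 0 := Int.cast_ne_zero.mpr (by omega)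
    push_cast at this; exact this
  exact div_ne_zero (mul_ne_zero h1 h2) two_ne_zero

lemma solC0_at_lam_sub_one (hlam : 2 ≤ lam) : solC0 lam (lam - 1) = 0 := by
  unfold solC0
  rw [if_neg (by omega)]

lemma solC1_at_lam_sub_one (hlam : 2 ≤ lam) : solC1 lam (lam - 1) = 1 := by
  unfold solC1
  rw [if_pos (by omega : (lam - 1 - (lam - 1)) % 2 = 0 ∧ -lam + 1 ≤ lam - 1 ∧ lam - 1 ≤ lam - 1),
    (by omega : (lam - 1 - (lam - 1)).toNat = 0)]
  simp

lemma solC1_at_lam (hlam : 2 ≤ lam) : solC1 lam lam = 0 := by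
  unfold solC1; rw [if_neg (by omega)]

lemma solC1_at_neg_lam (hlam : 2 ≤ lam) : solC1 lam (-lam) = 0 := by
  unfold solC1; rw [if_neg (by omega)]

lemma solC1_at_lam_sub_two (hlam : 2 ≤ lam) : solC1 lam (lam - 2) = 0 := by
  unfold solC1; rw [if_neg (by omega)]

lemma indicator_ne {a q : ℤ} (h : q ≠ a) : indicatorFn a q = 0 := by
  unfold indicatorFn; rw [if_neg h]

lemma indicator_self (a : ℤ) : indicatorFn a a = 1 := by
  unfold indicatorFn; rw [if_pos rfl]

lemma supp_indicator_lam (hlam : 2 ≤ lam) : ∀ q, lam < |q| → indicatorFn lam q = 0 := by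
  intro q hq
  rcases abs_cases' hq with h | h <;> exact indicator_ne (by omega)

lemma supp_indicator_neg_lam (hlam : 2 ≤ lam) : ∀ q, lam < |q| → indicatorFn (-lam) q = 0 := by
  intro q hq
  rcases abs_cases' hq with h | h <;> exact indicator_ne (by omega)

lemma supp_solC0 (hlam : 2 ≤ lam) : ∀ q, lam < |q| → solC0 lam q = 0 := by
  intro q hq
  rcases abs_cases' hq with h | h <;> (unfold solC0; rw [if_neg (by omega)])

lemma supp_solC1 (hlam : 2 ≤ lam) : ∀ q, lam < |q| → solC1 lam q = 0 := by
  intro q hq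
  rcases abs_cases' hq with h | h <;> (unfold solC1; rw [if_neg (by omega)])

/-- The solution set as a submodule. -/
noncomputable def solMod (lam : ℤ) (ν₁ ν₂ ν₃ : ℂ) : Submodule ℂ (ℤ → ℂ) where
  carrier := {c | IsSolS lam ν₁ ν₂ ν₃ c}
  zero_mem' := ⟨fun _ _ => rfl, fun q _ _ => by simp, fun q _ _ => by simp⟩
  add_mem' := by
    rintro a b ⟨ha0, ha1, ha2⟩ ⟨hb0, hb1, hb2⟩
    refine ⟨fun q hq => ?_, fun q h1 h2 => ?_, fun q h1 h2 => ?_⟩ <;>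
      simp only [Pi.add_apply]
    · rw [ha0 q hq, hb0 q hq]; ring
    · linear_combination ha1 q h1 h2 + hb1 q h1 h2
    · linear_combination ha2 q h1 h2 + hb2 q h1 h2
  smul_mem' := by
    rintro t c ⟨h0, h1, h2⟩
    refine ⟨fun q hq => ?_, fun q hq1 hq2 => ?_, fun q hq1 hq2 => ?_⟩ <;>
      simp only [Pi.smul_apply, smul_eq_mul]
    · rw [h0 q hq]; ring
    · linear_combination t * h1 q hq1 hq2
    · linear_combination t * h2 q hq1 hq2

lemma mem_solMod {lam : ℤ} {ν₁ ν₂ ν₃ : ℂ} {c : ℤ → ℂ} :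
    c ∈ solMod lam ν₁ ν₂ ν₃ ↔ IsSolS lam ν₁ ν₂ ν₃ c := Iff.rfl

/-- Vanishing at four key points plus recurrence forces a solution to vanish. -/
lemma eq_zero_of_vanish (hlam : 2 ≤ lam) (d : ℤ → ℂ)
    (hsupp : ∀ q, lam < |q| → d q = 0)
    (hR : ∀ q, -lam + 3 ≤ q → q ≤ lam - 1 → Rrec lam d q)
    (hA : d lam = 0) (hB : d (-lam) = 0) (hC : d (lam - 2) = 0) (hD : d (lam - 1) = 0) :
    d = 0 := by
  have key : ∀ n : ℕ, ∀ q : ℤ, -lam + 1 ≤ q → q ≤ lam - 1 → lam - 1 - q = n → d q = 0 := by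
    intro n
    induction n using Nat.strong_induction_on with
    | _ n ih =>
      match n with
      | 0 => intro q h1 h2 h3; rw [show q = lam - 1 by omega]; exact hD
      | 1 => intro q h1 h2 h3; rw [show q = lam - 2 by omega]; exact hC
      | (n + 2) =>
        intro q h1 h2 h3
        have hq2 : d (q + 2) = 0 := ih n (by omega) (q + 2) (by omega) (by omega) (by omega)
        have hr := hR (q + 2) (by omega) (by omega)
        unfold Rrec at hr
        push_cast at hr
        rw [show q + 2 - 2 = q by ring, hq2] at hr
        have c1 : ((lam:ℂ) - (q:ℂ)) ≠ 0 := by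
          have : ((lam - q : ℤ) : ℂ) ≠ 0 := Int.cast_ne_zero.mpr (by omega)
          push_cast at this; exact this
        have c2 : ((lam:ℂ) - (q:ℂ) - 1) ≠ 0 := by
          have : ((lam - q - 1 : ℤ) : ℂ) ≠ 0 := Int.cast_ne_zero.mpr (by omega)
          push_cast at this; exact this
        have hz : ((lam:ℂ) - (q:ℂ)) * (((lam:ℂ) - (q:ℂ)) - 1) * d q = 0 := by
          linear_combination hr
        rcases mul_eq_zero.mp hz with h | h
        · rcases mul_eq_zero.mp h with h' | h'
          · exact absurd h' c1
          · exact absurd h' c2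
        · exact h
  funext q
  show d q = 0
  by_cases h : lam < |q|
  · exact hsupp q h
  · have habs := abs_le.mp (not_lt.mp h)
    by_cases hq1 : q = lam
    · rw [hq1]; exact hA
    by_cases hq2 : q = -lam
    · rw [hq2]; exact hB
    exact key (lam - 1 - q).toNat q (by omega) (by omega) (by omega)

end SAux
open SAux
/-- If `λ ≥ 2`, `λ = ν₂ − ν₃ + 1` and `λ = ν₁ − ν₂ + 1`, then the solution space of
`S(λ,ν)` is four-dimensional, spanned by the indicator functions of `{λ}` and `{−λ}`
together with the functions `c₀` and `c₁`. -/
theorem solutions_of_S_when_lam_eq_both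
    (lam : ℤ) (hlam : 2 ≤ lam) (ν₁ ν₂ ν₃ : ℂ)
    (h23 : (lam : ℂ) = ν₂ - ν₃ + 1) (h12 : (lam : ℂ) = ν₁ - ν₂ + 1) :
    {c : ℤ → ℂ | IsSolS lam ν₁ ν₂ ν₃ c}
      = (Submodule.span ℂ
          {indicatorFn lam, indicatorFn (-lam), solC0 lam, solC1 lam} : Set (ℤ → ℂ)) ∧
    LinearIndependent ℂ ![indicatorFn lam, indicatorFn (-lam), solC0 lam, solC1 lam] := by
  have hiff := fun c => isSolS_iff lam hlam ν₁ ν₂ ν₃ h23 h12 c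
  -- the four generators are solutions
  have hg1 : IsSolS lam ν₁ ν₂ ν₃ (indicatorFn lam) :=
    (hiff _).mpr ⟨supp_indicator_lam hlam, rrec_indicator_lam lam⟩
  have hg2 : IsSolS lam ν₁ ν₂ ν₃ (indicatorFn (-lam)) :=
    (hiff _).mpr ⟨supp_indicator_neg_lam hlam, rrec_indicator_neg_lam lam⟩
  have hg3 : IsSolS lam ν₁ ν₂ ν₃ (solC0 lam) :=
    (hiff _).mpr ⟨supp_solC0 hlam, rrec_solC0 lam hlam⟩
  have hg4 : IsSolS lam ν₁ ν₂ ν₃ (solC1 lam) :=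
    (hiff _).mpr ⟨supp_solC1 hlam, rrec_solC1 lam hlam⟩
  have hspan_le : Submodule.span ℂ
      {indicatorFn lam, indicatorFn (-lam), solC0 lam, solC1 lam} ≤ solMod lam ν₁ ν₂ ν₃ := by
    rw [Submodule.span_le]
    rintro x hx
    simp only [Set.mem_insert_iff, Set.mem_singleton_iff] at hx
    rcases hx with rfl | rfl | rfl | rfl
    exacts [hg1, hg2, hg3, hg4]
  constructor
  · ext c
    simp only [Set.mem_setOf_eq, SetLike.mem_coe]
    constructor
    · intro hc
      set A := solC0 lam (lam - 2) with hA
      have hAne : A ≠ 0 := solC0_at_lam_sub_two_ne hlam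
      set α := c (lam - 2) / A with hα
      set combo := (c lam - α) • indicatorFn lam + (c (-lam) - α) • indicatorFn (-lam)
        + α • solC0 lam + c (lam - 1) • solC1 lam with hcombo
      have hmem : combo ∈ Submodule.span ℂ
          {indicatorFn lam, indicatorFn (-lam), solC0 lam, solC1 lam} := by
        refine add_mem (add_mem (add_mem ?_ ?_) ?_) ?_ <;>
          exact Submodule.smul_mem _ _ (Submodule.subset_span (by simp))
      have hcsol : combo ∈ solMod lam ν₁ ν₂ ν₃ := hspan_le hmem
      have hdiff : IsSolS lam ν₁ ν₂ ν₃ (c - combo) :=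
        mem_solMod.mp (sub_mem (mem_solMod.mpr hc) hcsol)
      have hd := (hiff _).mp hdiff
      have hne1 : lam - 2 ≠ lam := by omega
      have hne2 : lam - 2 ≠ -lam := by omega
      have hne3 : lam - 1 ≠ lam := by omega
      have hne4 : lam - 1 ≠ -lam := by omega
      have hne5 : lam ≠ -lam := by omega
      have hne6 : -lam ≠ lam := by omega
      have hzero : c - combo = 0 := by
        apply eq_zero_of_vanish hlam _ hd.1 hd.2
        · simp only [hcombo, Pi.sub_apply, Pi.add_apply, Pi.smul_apply, smul_eq_mul,
            indicator_self, indicator_ne hne5, indicator_ne hne6, solC0_at_lam hlam, solC1_at_lam hlam]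
          ring
        · simp only [hcombo, Pi.sub_apply, Pi.add_apply, Pi.smul_apply, smul_eq_mul,
            indicator_self, indicator_ne hne5, indicator_ne hne6, solC0_at_neg_lam hlam, solC1_at_neg_lam hlam]
          ring
        · simp only [hcombo, Pi.sub_apply, Pi.add_apply, Pi.smul_apply, smul_eq_mul,
            indicator_ne hne1, indicator_ne hne2, solC1_at_lam_sub_two hlam, ← hA]
          rw [hα, div_mul_cancel₀ _ hAne]; ring
        · simp only [hcombo, Pi.sub_apply, Pi.add_apply, Pi.smul_apply, smul_eq_mul,
            indicator_ne hne3, indicator_ne hne4, solC0_at_lam_sub_one hlam,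
            solC1_at_lam_sub_one hlam]
          ring
      have : c = combo := by
        have := sub_eq_zero.mp hzero
        exact this
      rw [this]; exact hmem
    · intro hc
      exact hspan_le hc
  · rw [Fintype.linearIndependent_iff]
    intro g hg
    have e := fun q : ℤ => congrFun hg q
    simp only [Fin.sum_univ_four, Matrix.cons_val_zero, Matrix.cons_val_one, Matrix.head_cons,
      Matrix.cons_val_two, Matrix.tail_cons, Matrix.cons_val_three, Pi.add_apply,
      Pi.smul_apply, smul_eq_mul, Pi.zero_apply] at e
    have e2 := e (lam - 2)
    rw [indicator_ne (by omega : lam - 2 ≠ lam), indicator_ne (by omega : lam - 2 ≠ -lam),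
      solC1_at_lam_sub_two hlam] at e2
    have hg2 : g 2 = 0 := by
      have hAne := solC0_at_lam_sub_two_ne (lam := lam) hlam
      have : g 2 * solC0 lam (lam - 2) = 0 := by linear_combination e2
      rcases mul_eq_zero.mp this with h | h
      · exact h
      · exact absurd h hAne
    have e0 := e lam
    rw [indicator_self, indicator_ne (by omega : lam ≠ -lam), solC0_at_lam hlam,
      solC1_at_lam hlam, hg2] at e0
    have hg0 : g 0 = 0 := by linear_combination e0
    have e1 := e (-lam)
    rw [indicator_self, indicator_ne (by omega : -lam ≠ lam), solC0_at_neg_lam hlam,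
      solC1_at_neg_lam hlam, hg2] at e1
    have hg1' : g 1 = 0 := by linear_combination e1
    have e3 := e (lam - 1)
    rw [indicator_ne (by omega : lam - 1 ≠ lam), indicator_ne (by omega : lam - 1 ≠ -lam),
      solC0_at_lam_sub_one hlam, solC1_at_lam_sub_one hlam, hg0, hg1', hg2] at e3
    have hg3' : g 3 = 0 := by linear_combination e3
    intro i
    fin_cases i
    exacts [hg0, hg1', hg2, hg3']
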